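/- Let C be a unitary in the k-th level C^(k) of the Clifford hierarchy that fixes under conjugation the group Z_N = {E(0,b) : b ∈ F_2^m} of diagonal Paulis (i.e., C Z_N C† = Z_N). Then C = D · E(a, 0) · G_D(P) for some diagonal unitary D ∈ C^(k), some a ∈ F_2^m, and some P ∈ GL(m, F_2), where G_D(P) is the permutation matrix |v⟩ ↦ |vP⟩. -/

import Mathlib

open Matrix
open scoped Classical

noncomputable section

abbrev V (m : ℕ) := Fin m → ZMod 2

/-- Integer dot product of two binary vectors (using {0,1} representatives). -/
def dotN {m : ℕ} (a b : V m) : ℕ := ∑ i, (a i).val * (b i).val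

/-- The matrix `D(a,b)` with `D(a,b)|v⟩ = (−1)^{b·v}|v⊕a⟩`. -/
def DM {m : ℕ} (a b : V m) : Matrix (V m) (V m) ℂ :=
  Matrix.of fun u v => if u = v + a then (-1 : ℂ) ^ dotN b v else 0

/-- The Hermitian Pauli `E(a,b) = i^{a·b mod 4} D(a,b)`, for `c = (a,b) ∈ F_2^{2m}`. -/
def EM {m : ℕ} (c : V m × V m) : Matrix (V m) (V m) ℂ :=
  Complex.I ^ dotN c.1 c.2 • DM c.1 c.2

/-- The Heisenberg–Weyl group `HW_N = {i^k D(a,b)}`, as a set of matrices. -/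
def HW (m : ℕ) : Set (Matrix (V m) (V m) ℂ) :=
  {M | ∃ (k : Fin 4) (a b : V m), M = Complex.I ^ (k : ℕ) • DM a b}

/-- A Clifford matrix: a unitary normalizing the Heisenberg–Weyl group. -/
def IsClifford {m : ℕ} (G : Matrix (V m) (V m) ℂ) : Prop :=
  G ∈ Matrix.unitaryGroup (V m) ℂ ∧ ∀ W ∈ HW m, G * W * Gᴴ ∈ HW m

/-- The (Pauli/Weyl) support of a matrix, identified with vectors in `F_2^{2m}`. -/
def supp {m : ℕ} (M : Matrix (V m) (V m) ℂ) : Set (V m × V m) :=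
  {c | Matrix.trace ((EM c)ᴴ * M) ≠ 0}

/-- The symplectic inner product on `F_2^{2m}`. -/
def sympl {m : ℕ} (u v : V m × V m) : ZMod 2 :=
  ∑ i, (u.1 i * v.2 i + u.2 i * v.1 i)

/-- The Clifford hierarchy; `CH m k` is the `(k+1)`-st level `C^(k+1)`, so
`CH m 0 = HW_N = C^(1)` and `C^(3) = CH m 2`. -/
def CH (m : ℕ) : ℕ → Set (Matrix (V m) (V m) ℂ)
  | 0 => HW m
  | k + 1 => {U | U ∈ Matrix.unitaryGroup (V m) ℂ ∧ ∀ W ∈ HW m, U * W * Uᴴ ∈ CH m k}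


/-- The permutation matrix `G_D(P) : |v⟩ ↦ |vP⟩`. -/
def GD {m : ℕ} (P : Matrix (Fin m) (Fin m) (ZMod 2)) : Matrix (V m) (V m) ℂ :=
  Matrix.of fun u v => if u = Matrix.vecMul v P then 1 else 0

/-- `Fix(P) = {v : vP = v}`. -/
def FixS {m : ℕ} (P : Matrix (Fin m) (Fin m) (ZMod 2)) : Set (V m) :=
  {v | Matrix.vecMul v P = v}

/-- `Res(P) = rowspace(I ⊕ P) = {v ⊕ vP : v ∈ F_2^m}`. -/
def ResS {m : ℕ} (P : Matrix (Fin m) (Fin m) (ZMod 2)) : Set (V m) :=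
  {w | ∃ v : V m, w = v + Matrix.vecMul v P}

/-- Euclidean dual with respect to the standard bilinear form on `F_2^m`. -/
def perp {m : ℕ} (A : Set (V m)) : Set (V m) :=
  {w | ∀ v ∈ A, ∑ i, w i * v i = 0}

-- helpers part 1
lemma zmod2_add_self : ∀ x : ZMod 2, x + x = 0 := by decide

lemma V_add_self {m : ℕ} (a : V m) : a + a = 0 := by
  funext i; exact zmod2_add_self (a i)

lemma parity_of_neg_one_pow {p q : ℕ} (h : ((-1:ℂ))^p = (-1)^q) : ((p : ZMod 2)) = q := by
  have : p % 2 = q % 2 := by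
    rcases Nat.even_or_odd p with hp | hp <;> rcases Nat.even_or_odd q with hq | hq
    · rw [Nat.even_iff.mp hp, Nat.even_iff.mp hq]
    · exfalso; rw [hp.neg_one_pow, hq.neg_one_pow] at h; norm_num at h
    · exfalso; rw [hp.neg_one_pow, hq.neg_one_pow] at h; norm_num at h
    · rw [Nat.odd_iff.mp hp, Nat.odd_iff.mp hq]
  exact (ZMod.natCast_eq_natCast_iff _ _ _).mpr this

lemma neg_one_pow_eq_of_parity {p q : ℕ} (h : ((p : ZMod 2)) = (q : ZMod 2)) :
    ((-1:ℂ))^p = (-1)^q := by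
  have h2 : p % 2 = q % 2 := (ZMod.natCast_eq_natCast_iff _ _ _).mp h
  rcases Nat.even_or_odd p with hp | hp
  · have hq : Even q := by rw [Nat.even_iff, ← h2, ← Nat.even_iff]; exact hp
    rw [hp.neg_one_pow, hq.neg_one_pow]
  · have hq : Odd q := by rw [Nat.odd_iff, ← h2, ← Nat.odd_iff]; exact hp
    rw [hp.neg_one_pow, hq.neg_one_pow]

/-- dot product over `ZMod 2` -/
def dot2 {m : ℕ} (a b : V m) : ZMod 2 := ∑ i, a i * b i

lemma dotN_cast {m : ℕ} (a b : V m) : ((dotN a b : ℕ) : ZMod 2) = dot2 a b := by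
  unfold dotN dot2
  push_cast [ZMod.natCast_val, ZMod.cast_id]
  rfl

lemma neg_one_pow_dotN_eq {m : ℕ} {a b c d : V m} (h : dot2 a b = dot2 c d) :
    ((-1:ℂ))^(dotN a b) = (-1)^(dotN c d) :=
  neg_one_pow_eq_of_parity (by rw [dotN_cast, dotN_cast, h])

lemma dot2_single {m : ℕ} (i : Fin m) (v : V m) : dot2 (Pi.single i 1) v = v i := by
  unfold dot2
  rw [Finset.sum_eq_single i]
  · simp
  · intro j _ hj; simp [Pi.single_eq_of_ne hj]
  · simp

lemma dot2_ext {m : ℕ} {x y : V m} (h : ∀ b, dot2 b x = dot2 b y) : x = y := by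
  funext i
  have := h (Pi.single i 1)
  rwa [dot2_single, dot2_single] at this

@[simp] lemma dot2_zero_right {m : ℕ} (b : V m) : dot2 b 0 = 0 := by simp [dot2]

lemma dot2_add_right {m : ℕ} (b x y : V m) : dot2 b (x + y) = dot2 b x + dot2 b y := by
  simp [dot2, mul_add, Finset.sum_add_distrib]

lemma dot2_vecMul {m : ℕ} (b v : V m) (A : Matrix (Fin m) (Fin m) (ZMod 2)) :
    dot2 b (Matrix.vecMul v A) = dot2 (Matrix.mulVec A b) v := by
  unfold dot2
  simp only [Matrix.vecMul, Matrix.mulVec, dotProduct, Finset.sum_mul, Finset.mul_sum]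
  rw [Finset.sum_comm]
  apply Finset.sum_congr rfl; intro i _
  apply Finset.sum_congr rfl; intro j _
  ring

lemma EM_zero_apply {m : ℕ} (b : V m) (u v : V m) :
    EM (0, b) u v = if u = v then ((-1:ℂ))^(dotN b v) else 0 := by
  have h0 : dotN (0 : V m) b = 0 := by simp [dotN]
  simp [EM, DM, h0]

lemma EM_zero_zero {m : ℕ} : EM ((0:V m), (0:V m)) = 1 := by
  ext u v
  rw [EM_zero_apply]
  simp [dotN, Matrix.one_apply]

lemma GD_one {m : ℕ} : GD (1 : Matrix (Fin m) (Fin m) (ZMod 2)) = 1 := by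
  ext u v
  simp [GD, Matrix.one_apply, eq_comm]

section GDlemmas
variable {m : ℕ} {Q : Matrix (Fin m) (Fin m) (ZMod 2)}

lemma vecMul_cancel (hQ : IsUnit Q) {u v : V m} :
    u = Matrix.vecMul v Q ↔ Matrix.vecMul u Q⁻¹ = v := by
  have hd : IsUnit Q.det := (Matrix.isUnit_iff_isUnit_det Q).mp hQ
  constructor
  · rintro rfl
    rw [Matrix.vecMul_vecMul, Matrix.mul_nonsing_inv _ hd, Matrix.vecMul_one]
  · rintro rfl
    rw [Matrix.vecMul_vecMul, Matrix.nonsing_inv_mul _ hd, Matrix.vecMul_one]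

lemma GD_conjTranspose (hQ : IsUnit Q) : (GD Q)ᴴ = GD Q⁻¹ := by
  have hd : IsUnit Q.det := (Matrix.isUnit_iff_isUnit_det Q).mp hQ
  ext u v
  simp only [Matrix.conjTranspose_apply, GD, Matrix.of_apply]
  have : (v = Matrix.vecMul u Q) ↔ (u = Matrix.vecMul v Q⁻¹) := by
    rw [vecMul_cancel hQ, eq_comm]
  rw [if_congr this rfl rfl]
  split <;> simp

lemma GD_mul (P Q : Matrix (Fin m) (Fin m) (ZMod 2)) : GD P * GD Q = GD (Q * P) := by
  ext u v
  rw [Matrix.mul_apply]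
  rw [Finset.sum_eq_single (Matrix.vecMul v Q)]
  · simp [GD, Matrix.vecMul_vecMul]
  · intro w _ hw
    simp only [GD, Matrix.of_apply, if_neg hw, mul_zero]
  · simp

lemma GD_unitary (hQ : IsUnit Q) : GD Q ∈ Matrix.unitaryGroup (V m) ℂ := by
  have hd : IsUnit Q.det := (Matrix.isUnit_iff_isUnit_det Q).mp hQ
  rw [Matrix.mem_unitaryGroup_iff, Matrix.star_eq_conjTranspose, GD_conjTranspose hQ, GD_mul,
    Matrix.nonsing_inv_mul _ hd, GD_one]

end GDlemmas

section GDconj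
variable {m : ℕ} {Q : Matrix (Fin m) (Fin m) (ZMod 2)}

lemma GD_conj_DM (hQ : IsUnit Q) (a b : V m) :
    GD Q * DM a b * (GD Q)ᴴ = DM (Matrix.vecMul a Q) (Matrix.mulVec Q⁻¹ b) := by
  have hd : IsUnit Q.det := (Matrix.isUnit_iff_isUnit_det Q).mp hQ
  have h1 : GD Q * DM a b = Matrix.of
      (fun u v => DM a b (Matrix.vecMul u Q⁻¹) v) := by
    ext u v
    rw [Matrix.mul_apply, Finset.sum_eq_single (Matrix.vecMul u Q⁻¹)]
    · simp only [GD, Matrix.of_apply]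
      rw [if_pos ((vecMul_cancel hQ).mpr rfl), one_mul]
    · intro w _ hw
      have : ¬ (u = Matrix.vecMul w Q) := fun h => hw ((vecMul_cancel hQ).mp h).symm
      simp only [GD, Matrix.of_apply, if_neg this, zero_mul]
    · simp
  rw [h1, GD_conjTranspose hQ]
  ext u v
  rw [Matrix.mul_apply, Finset.sum_eq_single (Matrix.vecMul v Q⁻¹)]
  · simp only [GD, Matrix.of_apply, if_pos rfl, mul_one, DM]
    have hcond : (Matrix.vecMul u Q⁻¹ = Matrix.vecMul v Q⁻¹ + a)
        ↔ (u = v + Matrix.vecMul a Q) := by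
      constructor
      · intro h
        have := congrArg (fun x => Matrix.vecMul x Q) h
        simpa [Matrix.add_vecMul, Matrix.vecMul_vecMul,
          Matrix.nonsing_inv_mul _ hd, Matrix.vecMul_one] using this
      · intro h
        rw [h, Matrix.add_vecMul, Matrix.vecMul_vecMul, Matrix.mul_nonsing_inv _ hd,
          Matrix.vecMul_one]
    rw [if_congr hcond rfl rfl]
    have hexp : ((-1:ℂ))^(dotN b (Matrix.vecMul v Q⁻¹))
        = (-1)^(dotN (Matrix.mulVec Q⁻¹ b) v) :=
      neg_one_pow_dotN_eq (by rw [dot2_vecMul])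
    rw [hexp]
    simp
  · intro w _ hw
    simp only [GD, Matrix.of_apply]
    rw [if_neg (fun h => hw (by rw [h])), mul_zero]
  · simp

lemma GD_conj_HW (hQ : IsUnit Q) : ∀ W ∈ HW m, GD Q * W * (GD Q)ᴴ ∈ HW m := by
  rintro W ⟨j, a, b, rfl⟩
  refine ⟨j, Matrix.vecMul a Q, Matrix.mulVec Q⁻¹ b, ?_⟩
  rw [Matrix.mul_smul, Matrix.smul_mul, GD_conj_DM hQ]

lemma CH_mul_GD (hQ : IsUnit Q) : ∀ k (U : Matrix (V m) (V m) ℂ),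
    U ∈ CH m (k+1) → U * GD Q ∈ CH m (k+1) := by
  intro k U hU
  refine ⟨Submonoid.mul_mem _ hU.1 (GD_unitary hQ), ?_⟩
  intro W hW
  have h1 : (U * GD Q) * W * (U * GD Q)ᴴ = U * (GD Q * W * (GD Q)ᴴ) * Uᴴ := by
    rw [Matrix.conjTranspose_mul]
    noncomm_ring
  rw [h1]
  exact hU.2 _ (GD_conj_HW hQ W hW)

end GDconj

lemma zmod2_cases : ∀ x : ZMod 2, x = 0 ∨ x = 1 := by decide

/-- if a unitary `C` in a level `C^(k)` of the Clifford hierarchy fixes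
under conjugation the group `Z_N = {E(0,b)}` of diagonal Paulis, then
`C = D · E(a,0) · G_D(P)` with `D` a diagonal element of `C^(k)`, `a ∈ F₂^m`,
`P ∈ GL(m,F₂)`.  (Here `CH m k` denotes the level `C^(k+1)`.) -/
theorem stmt10 {m : ℕ} (hm : 1 ≤ m) (k : ℕ) (C : Matrix (V m) (V m) ℂ)
    (hU : C ∈ Matrix.unitaryGroup (V m) ℂ) (hC : C ∈ CH m k)
    (hfix : (fun W => C * W * Cᴴ) '' {M : Matrix (V m) (V m) ℂ | ∃ b : V m, M = EM (0, b)} =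
      {M : Matrix (V m) (V m) ℂ | ∃ b : V m, M = EM (0, b)}) :
    ∃ (D : Matrix (V m) (V m) ℂ) (a : V m) (P : Matrix (Fin m) (Fin m) (ZMod 2)),
      D.IsDiag ∧ D ∈ CH m k ∧ IsUnit P ∧ C = D * EM (a, 0) * GD P := by
  have hCC : Cᴴ * C = 1 := by
    rw [← Matrix.star_eq_conjTranspose]; exact Matrix.mem_unitaryGroup_iff'.mp hU
  have hCC' : C * Cᴴ = 1 := by
    rw [← Matrix.star_eq_conjTranspose]; exact Matrix.mem_unitaryGroup_iff.mp hU
  -- the induced permutation σ on the labels b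
  have hσex : ∀ b : V m, ∃ b', C * EM (0, b) * Cᴴ = EM (0, b') := by
    intro b
    have hmem : C * EM (0, b) * Cᴴ ∈
        {M : Matrix (V m) (V m) ℂ | ∃ b : V m, M = EM (0, b)} := by
      rw [← hfix]; exact ⟨EM (0, b), ⟨b, rfl⟩, rfl⟩
    exact hmem
  choose σ hσ using hσex
  -- the key entrywise relation
  have hkey : ∀ (b u v : V m), C u v ≠ 0 → dot2 b v = dot2 (σ b) u := by
    intro b u v hne
    have h1 : C * EM (0, b) = EM (0, σ b) * C := by
      calc C * EM (0, b) = C * EM (0, b) * (Cᴴ * C) := by rw [hCC, mul_one]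
        _ = (C * EM (0, b) * Cᴴ) * C := by noncomm_ring
        _ = EM (0, σ b) * C := by rw [hσ b]
    have hL : (C * EM (0, b)) u v = C u v * (-1:ℂ)^(dotN b v) := by
      rw [Matrix.mul_apply, Finset.sum_eq_single v]
      · rw [EM_zero_apply, if_pos rfl]
      · intro w _ hw; rw [EM_zero_apply, if_neg hw, mul_zero]
      · simp
    have hR : (EM (0, σ b) * C) u v = (-1:ℂ)^(dotN (σ b) u) * C u v := by
      rw [Matrix.mul_apply, Finset.sum_eq_single u]
      · rw [EM_zero_apply, if_pos rfl]
      · intro w _ hw; rw [EM_zero_apply, if_neg (Ne.symm hw), zero_mul]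
      · simp
    have h2 : C u v * (-1:ℂ)^(dotN b v) = C u v * (-1:ℂ)^(dotN (σ b) u) := by
      rw [← hL, h1, hR, mul_comm]
    have h3 := mul_left_cancel₀ hne h2
    have h4 := parity_of_neg_one_pow h3
    rwa [dotN_cast, dotN_cast] at h4
  -- each row of C has a nonzero entry, pick it
  have hrow : ∀ u : V m, ∃ v, C u v ≠ 0 := by
    intro u
    by_contra h; push_neg at h
    have h2 : (C * Cᴴ) u u = 0 := by
      rw [Matrix.mul_apply]
      exact Finset.sum_eq_zero fun v _ => by rw [h v, zero_mul]
    rw [hCC', Matrix.one_apply_eq] at h2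
    exact one_ne_zero h2
  choose f hf using hrow
  have hfchar : ∀ u b, dot2 b (f u) = dot2 (σ b) u := fun u b => hkey b u (f u) (hf u)
  have huniq : ∀ u v, C u v ≠ 0 → v = f u := by
    intro u v hv
    exact dot2_ext fun b => (hkey b u v hv).trans (hfchar u b).symm
  have hfadd : ∀ u u', f (u + u') = f u + f u' := by
    intro u u'
    apply dot2_ext; intro b
    rw [hfchar, dot2_add_right, dot2_add_right, hfchar, hfchar]
  have hf0 : f 0 = 0 := by
    apply dot2_ext; intro b
    rw [hfchar, dot2_zero_right, dot2_zero_right]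
  have hfinj : Function.Injective f := by
    intro u u' h
    by_contra hne
    have h0 : (C * Cᴴ) u u' = 0 := by rw [hCC', Matrix.one_apply_ne hne]
    rw [Matrix.mul_apply, Finset.sum_eq_single (f u)] at h0
    · refine mul_ne_zero (hf u) ?_ h0
      rw [Matrix.conjTranspose_apply]
      exact star_ne_zero.mpr (by rw [h]; exact hf u')
    · intro w _ hw
      rcases eq_or_ne (C u w) 0 with hz | hz
      · rw [hz, zero_mul]
      · exact absurd (huniq u w hz) hw
    · simp
  -- the matrix M representing f
  set M : Matrix (Fin m) (Fin m) (ZMod 2) :=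
    Matrix.of (fun i j => f (Pi.single i 1) j) with hMdef
  have hfsingle : ∀ (i : Fin m) (c : ZMod 2) (j : Fin m),
      f (Pi.single i c) j = c * f (Pi.single i 1) j := by
    intro i c j
    rcases zmod2_cases c with rfl | rfl
    · rw [Pi.single_zero, hf0]; simp
    · rw [one_mul]
  have hfM : ∀ u, f u = Matrix.vecMul u M := by
    intro u
    have F : V m →+ V m := AddMonoidHom.mk' f (fun a b => hfadd a b)
    have hsum : f u = ∑ i, f (Pi.single i (u i)) := by
      conv_lhs => rw [← Finset.univ_sum_single u]
      exact map_sum (AddMonoidHom.mk' f (fun a b => hfadd a b))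
        (fun i => Pi.single i (u i)) Finset.univ
    funext j
    rw [hsum]
    simp only [Finset.sum_apply]
    rw [Matrix.vecMul, dotProduct]
    exact Finset.sum_congr rfl fun i _ => hfsingle i (u i) j
  have hMunit : IsUnit M := by
    rw [← Matrix.vecMul_injective_iff_isUnit]
    intro x y h
    apply hfinj
    rw [hfM, hfM]
    exact h
  have hMdet : IsUnit M.det := (Matrix.isUnit_iff_isUnit_det M).mp hMunit
  set P : Matrix (Fin m) (Fin m) (ZMod 2) := M⁻¹ with hPdef
  have hPunit : IsUnit P := Matrix.isUnit_nonsing_inv_iff.mpr hMunit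
  have hPinv : P⁻¹ = M := Matrix.nonsing_inv_nonsing_inv M hMdet
  set D : Matrix (V m) (V m) ℂ := C * (GD P)ᴴ with hDdef
  have hGDP : (GD P)ᴴ = GD M := by rw [GD_conjTranspose hPunit, hPinv]
  have hDM : D = C * GD M := by rw [hDdef, hGDP]
  have hDapp : ∀ u w, D u w = C u (Matrix.vecMul w M) := by
    intro u w
    rw [hDM, Matrix.mul_apply, Finset.sum_eq_single (Matrix.vecMul w M)]
    · simp [GD]
    · intro x _ hx
      simp only [GD, Matrix.of_apply, if_neg hx, mul_zero]
    · simp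
  have hdiag : D.IsDiag := by
    intro u w hne
    rw [hDapp]
    by_contra hz
    have h1 : Matrix.vecMul w M = Matrix.vecMul u M :=
      (huniq u _ hz).trans (hfM u)
    have h2 : w = u := by
      have := congrArg (fun x => Matrix.vecMul x P) h1
      simpa [hPdef, Matrix.vecMul_vecMul, Matrix.mul_nonsing_inv M hMdet] using this
    exact hne (h2 ▸ rfl)
  have hCD : C = D * EM ((0 : V m), (0 : V m)) * GD P := by
    rw [EM_zero_zero, mul_one, hDM, Matrix.mul_assoc, GD_mul, Matrix.nonsing_inv_mul M hMdet,
      GD_one, mul_one]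
  refine ⟨D, 0, P, hdiag, ?_, hPunit, hCD⟩
  -- membership in the hierarchy level
  cases k with
  | zero =>
    obtain ⟨j, a, b, hCab⟩ := hC
    have hCne : ∀ u v : V m, u = v + a → C u v ≠ 0 := by
      intro u v huv
      rw [hCab]
      simp only [Matrix.smul_apply, DM, Matrix.of_apply, if_pos huv, smul_eq_mul]
      exact mul_ne_zero (pow_ne_zero _ Complex.I_ne_zero) (pow_ne_zero _ (by norm_num))
    have ha : a = 0 := by
      have h1 : C 0 a ≠ 0 := hCne 0 a (by rw [V_add_self])
      exact (huniq 0 a h1).trans hf0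
    have hfid : ∀ u, f u = u := by
      intro u
      exact (huniq u u (hCne u u (by rw [ha, add_zero]))).symm
    have hM1 : M = 1 := by
      ext i j
      have h1 := congrFun (hfM (Pi.single i 1)) j
      rw [hfid, Matrix.single_one_vecMul] at h1
      change _ = M i j at h1
      rw [← h1, Matrix.one_apply, Pi.single_apply]
      simp [eq_comm]
    have hD1 : D = C := by
      rw [hDdef, hPdef, hM1, Matrix.inv_eq_left_inv (by rw [one_mul]), GD_one, Matrix.conjTranspose_one, mul_one]
    rw [hD1]
    exact ⟨j, a, b, hCab⟩
  | succ k' =>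
    rw [hDM]
    exact CH_mul_GD hMunit k' C hC
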